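/- If Φ is an m×M matrix with unit norm columns and coherence μ, then Φ satisfies the Restricted Isometry Property of order k with constant δ_k = (k-1)μ, i.e., for all k-sparse x ∈ R^M, (1-(k-1)μ)‖x‖₂² ≤ ‖Φx‖₂² ≤ (1+(k-1)μ)‖x‖₂². -/
import Mathlib


open Matrix BigOperators Finset
open scoped Classical

noncomputable def coherence {m M : ℕ} (A : Matrix (Fin m) (Fin M) ℝ) : ℝ :=
  sSup {r : ℝ | ∃ i j : Fin M, i ≠ j ∧ r = |∑ k, A k i * A k j|}

lemma coherence_nonneg {m M : ℕ} (A : Matrix (Fin m) (Fin M) ℝ) : 0 ≤ coherence A :=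
  Real.sSup_nonneg (by rintro r ⟨i, j, -, rfl⟩; exact abs_nonneg _)

lemma le_coherence {m M : ℕ} (A : Matrix (Fin m) (Fin M) ℝ) {i j : Fin M} (h : i ≠ j) :
    |∑ l, A l i * A l j| ≤ coherence A := by
  apply le_csSup
  · refine BddAbove.mono ?_
      ((Set.finite_range fun p : Fin M × Fin M => |∑ l, A l p.1 * A l p.2|).bddAbove)
    rintro r ⟨i, j, -, rfl⟩; exact ⟨(i, j), rfl⟩
  · exact ⟨i, j, h, rfl⟩

/-- If `Φ` has unit-norm columns and coherence `μ`, then `Φ` satisfies RIP of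
order `k` with constant `δ_k = (k-1)μ`. -/
theorem rip_from_coherence {m M : ℕ} (Φ : Matrix (Fin m) (Fin M) ℝ) (k : ℕ)
    (hunit : ∀ i, ∑ l, Φ l i * Φ l i = 1)
    (hδ : ((k : ℝ) - 1) * coherence Φ < 1)
    (x : Fin M → ℝ)
    (hsparse : (Finset.univ.filter fun i => x i ≠ 0).card ≤ k) :
    (1 - ((k : ℝ) - 1) * coherence Φ) * ∑ i, x i ^ 2 ≤ ∑ l, (Φ.mulVec x l) ^ 2 ∧
    ∑ l, (Φ.mulVec x l) ^ 2 ≤ (1 + ((k : ℝ) - 1) * coherence Φ) * ∑ i, x i ^ 2 := by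
  set μ := coherence Φ with hμ
  have hμ0 : 0 ≤ μ := coherence_nonneg Φ
  set S := Finset.univ.filter fun i => x i ≠ 0 with hS
  set Q : ℝ := ∑ i, x i ^ 2 with hQ
  have hQ0 : 0 ≤ Q := Finset.sum_nonneg fun i _ => sq_nonneg _
  -- Expansion of the quadratic form
  have expand : ∑ l, (Φ.mulVec x l) ^ 2
      = ∑ i, ∑ j, x i * x j * ∑ l, Φ l i * Φ l j := by
    calc ∑ l, (Φ.mulVec x l) ^ 2
        = ∑ l, ∑ i, ∑ j, (Φ l i * x i) * (Φ l j * x j) := by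
          refine Finset.sum_congr rfl fun l _ => ?_
          rw [Matrix.mulVec, dotProduct, sq, Finset.sum_mul_sum]
      _ = ∑ i, ∑ j, x i * x j * ∑ l, Φ l i * Φ l j := by
          rw [Finset.sum_comm]
          refine Finset.sum_congr rfl fun i _ => ?_
          rw [Finset.sum_comm]
          refine Finset.sum_congr rfl fun j _ => ?_
          rw [Finset.mul_sum]
          exact Finset.sum_congr rfl fun l _ => by ring
  -- split diagonal and off-diagonal
  set E : ℝ := ∑ i, ∑ j ∈ Finset.univ.erase i, x i * x j * ∑ l, Φ l i * Φ l j with hE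
  have split : ∑ l, (Φ.mulVec x l) ^ 2 = Q + E := by
    rw [expand, hQ, hE, ← Finset.sum_add_distrib]
    refine Finset.sum_congr rfl fun i _ => ?_
    rw [← Finset.add_sum_erase _ _ (Finset.mem_univ i), hunit i]
    ring_nf
  -- off diagonal absolute sum
  have habsE : |E| ≤ μ * ((∑ i, |x i|) ^ 2 - Q) := by
    have h1 : |E| ≤ ∑ i, ∑ j ∈ Finset.univ.erase i, |x i| * |x j| * μ := by
      refine (Finset.abs_sum_le_sum_abs _ _).trans (Finset.sum_le_sum fun i _ => ?_)
      refine (Finset.abs_sum_le_sum_abs _ _).trans (Finset.sum_le_sum fun j hj => ?_)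
      rw [abs_mul, abs_mul]
      exact mul_le_mul_of_nonneg_left (le_coherence Φ (Finset.ne_of_mem_erase hj).symm)
        (mul_nonneg (abs_nonneg _) (abs_nonneg _))
    have h2 : ∑ i, ∑ j ∈ Finset.univ.erase i, |x i| * |x j| * μ
        = μ * ((∑ i, |x i|) ^ 2 - Q) := by
      have : ∀ i : Fin M, ∑ j ∈ Finset.univ.erase i, |x i| * |x j| * μ
          = (∑ j, |x i| * |x j| * μ) - |x i| * |x i| * μ := by
        intro i
        rw [← Finset.add_sum_erase _ (fun j => |x i| * |x j| * μ) (Finset.mem_univ i)]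
        ring
      rw [Finset.sum_congr rfl fun i _ => this i, Finset.sum_sub_distrib]
      have e1 : ∑ i : Fin M, ∑ j, |x i| * |x j| * μ = (∑ i, |x i|) ^ 2 * μ := by
        rw [sq, Finset.sum_mul_sum, Finset.sum_mul]
        refine Finset.sum_congr rfl fun i _ => ?_
        rw [Finset.sum_mul]
      have e2 : ∑ i : Fin M, |x i| * |x i| * μ = Q * μ := by
        rw [hQ, Finset.sum_mul]
        exact Finset.sum_congr rfl fun i _ => by rw [← abs_mul, ← sq, abs_sq]
      rw [e1, e2]; ring
    exact h1.trans_eq h2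
  -- Cauchy-Schwarz on the support
  have hsupp : ∑ i, |x i| = ∑ i ∈ S, |x i| := by
    refine (Finset.sum_subset (Finset.subset_univ S) fun i _ hi => ?_).symm
    have : x i = 0 := by
      by_contra h; exact hi (Finset.mem_filter.mpr ⟨Finset.mem_univ i, h⟩)
    simp [this]
  have hQsupp : ∑ i ∈ S, |x i| ^ 2 ≤ Q := by
    refine Finset.sum_le_sum_of_subset_of_nonneg (Finset.subset_univ S) ?_ |>.trans_eq ?_
    · intro i _ _; exact sq_nonneg _
    · exact Finset.sum_congr rfl fun i _ => by rw [sq_abs]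
  have hcs : (∑ i, |x i|) ^ 2 ≤ (k : ℝ) * Q := by
    rw [hsupp]
    have := Finset.sum_mul_sq_le_sq_mul_sq S (fun i => |x i|) (fun _ => 1)
    simp only [mul_one, one_pow, Finset.sum_const, nsmul_eq_mul] at this
    calc (∑ i ∈ S, |x i|) ^ 2 ≤ (∑ i ∈ S, |x i| ^ 2) * S.card := this
      _ ≤ Q * k := by
          refine mul_le_mul hQsupp (Nat.cast_le.mpr hsparse) (Nat.cast_nonneg _) hQ0
      _ = (k : ℝ) * Q := mul_comm _ _
  have hEbound : |E| ≤ ((k : ℝ) - 1) * μ * Q := by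
    refine habsE.trans ?_
    have : (∑ i, |x i|) ^ 2 - Q ≤ ((k : ℝ) - 1) * Q := by nlinarith
    nlinarith
  have h1 := abs_le.mp hEbound
  constructor
  · rw [split]; nlinarith [h1.1]
  · rw [split]; nlinarith [h1.2]
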